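/- arXiv:2005.02889 — 3 statements merged into one kernel-verified Lean document; each statement's English description precedes it below -/
import Mathlib

section
/- Let L_n ≥ L ≥ 0 be integers and 0 ≤ K < 2^L, and for 0 ≤ j < 2^{L_n+1} let H_j = 2^{L_n+1}·∫_{I^{L_n+1}_j} ψ_{LK}(x)/M0(x) dx (the heights of the histogram P_{L_n}(ψ_{LK}/M0)). Then there exists C = C(m, C0) such that Σ_{j=1}^{2^{L_n+1}−1} |H_j − H_{j−1}| ≤ C·2^{L/2}. -/
open MeasureTheory Real Set

noncomputable section

/-- The Haar mother wavelet `ψ = 1_{(0,1/2]} − 1_{(1/2,1]}`. -/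
def haarMother (x : ℝ) : ℝ :=
  (Set.Ioc (0:ℝ) (1/2)).indicator (fun _ => (1:ℝ)) x
    - (Set.Ioc (1/2:ℝ) 1).indicator (fun _ => (1:ℝ)) x

/-- The Haar wavelet `ψ_{lk}(x) = 2^{l/2} ψ(2^l x − k)`. -/
def haarPsi (l k : ℕ) (x : ℝ) : ℝ :=
  (2:ℝ) ^ ((l:ℝ) / 2) * haarMother ((2:ℝ) ^ l * x - k)

/-- The dyadic interval `I^l_k = (k 2^{−l}, (k+1) 2^{−l}]`. -/
def dyadicI (l k : ℕ) : Set ℝ := Set.Ioc ((k:ℝ) / 2 ^ l) (((k:ℝ) + 1) / 2 ^ l)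

/-- `f ∈ V_L`: `f` is constant on each dyadic interval `I^{L+1}_j`, `0 ≤ j < 2^{L+1}`. -/
def MemV (L : ℕ) (f : ℝ → ℝ) : Prop :=
  ∀ j < 2 ^ (L + 1), ∀ x ∈ dyadicI (L + 1) j, ∀ y ∈ dyadicI (L + 1) j, f x = f y

/-- The `L²`-orthogonal projection onto `V_L`: on each dyadic interval `I^{L+1}_j`,
`(P_L f)(x)` is the average `2^{L+1} ∫_{I^{L+1}_j} f`. -/
def dyadicProj (L : ℕ) (f : ℝ → ℝ) (x : ℝ) : ℝ :=
  (2:ℝ) ^ (L + 1) *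
    ∫ t in (((⌈(2:ℝ) ^ (L + 1) * x⌉ - 1 : ℤ) : ℝ) / 2 ^ (L + 1))..
        (((⌈(2:ℝ) ^ (L + 1) * x⌉ : ℤ) : ℝ) / 2 ^ (L + 1)), f t

/-- The multiscale metric
`ℓ∞(f,g) = |⟨f−g, φ⟩| + Σ_{l≥0} 2^{l/2} max_{0≤k<2^l} |⟨f−g, ψ_{lk}⟩|`. -/
def ellInfinity (f g : ℝ → ℝ) : ℝ :=
  |∫ x in (0:ℝ)..1, (f x - g x)| +
    ∑' l : ℕ, (2:ℝ) ^ ((l:ℝ) / 2) *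
      ⨆ k : Fin (2 ^ l), |∫ x in (0:ℝ)..1, (f x - g x) * haarPsi l k x|

/-- The Hölder ball `H(β,D)` on `[0,1]` (for `0 < β ≤ 1`). -/
def HolderC (β D : ℝ) (f : ℝ → ℝ) : Prop :=
  ∀ x ∈ Set.Icc (0:ℝ) 1, ∀ y ∈ Set.Icc (0:ℝ) 1, |f x - f y| ≤ D * |x - y| ^ β

lemma haar_step (L K N j r : ℕ) (hr : 1 ≤ r) (hN : N = L + r) (x : ℝ)
    (hx1 : (j:ℝ)/2^N < x) (hx2 : x ≤ ((j:ℝ)+1)/2^N) :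
    haarPsi L K x =
      if K * 2^r ≤ j ∧ j < K * 2^r + 2^(r-1) then (2:ℝ)^((L:ℝ)/2)
      else if K * 2^r + 2^(r-1) ≤ j ∧ j < K*2^r + 2^r then -((2:ℝ)^((L:ℝ)/2))
      else 0 := by
  have h2N : (0:ℝ) < 2^N := by positivity
  have h2r : (0:ℝ) < 2^r := by positivity
  have key1 : (j:ℝ) < 2^N * x := by
    rw [div_lt_iff₀ h2N] at hx1; linarith
  have key2 : (2:ℝ)^N * x ≤ (j:ℝ) + 1 := by
    rw [le_div_iff₀ h2N] at hx2; linarith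
  set y : ℝ := (2:ℝ)^L * x - K with hy
  have hNx : (2:ℝ)^N * x = 2^r * (y + K) := by
    rw [hy, hN, pow_add]; ring
  rw [hNx] at key1 key2
  have hpow : (2:ℝ)^(r-1) * 2 = 2^r := by
    rw [← pow_succ]; congr 1; omega
  have hmain : haarPsi L K x = (2:ℝ)^((L:ℝ)/2) * haarMother y := rfl
  rw [hmain]
  split_ifs with h1 h2
  · -- positive part
    have c1 : ((K * 2^r : ℕ) : ℝ) ≤ (j:ℝ) := by exact_mod_cast h1.1
    have c2 : ((j:ℝ)) + 1 ≤ ((K * 2^r + 2^(r-1) : ℕ) : ℝ) := by exact_mod_cast h1.2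
    push_cast at c1 c2
    have hy1 : 0 < y := by nlinarith
    have hy2 : y ≤ 1/2 := by nlinarith
    have : haarMother y = 1 := by
      rw [haarMother, Set.indicator_of_mem (show y ∈ Set.Ioc (0:ℝ) (1/2) from ⟨hy1, hy2⟩),
        Set.indicator_of_notMem (by simp only [Set.mem_Ioc, not_and]; intro h; linarith)]
      norm_num
    rw [this, mul_one]
  · -- negative part
    have c1 : ((K * 2^r + 2^(r-1) : ℕ) : ℝ) ≤ (j:ℝ) := by exact_mod_cast h2.1
    have c2 : ((j:ℝ)) + 1 ≤ ((K * 2^r + 2^r : ℕ) : ℝ) := by exact_mod_cast h2.2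
    push_cast at c1 c2
    have hy1 : 1/2 < y := by nlinarith
    have hy2 : y ≤ 1 := by nlinarith
    have : haarMother y = -1 := by
      rw [haarMother, Set.indicator_of_notMem (by simp only [Set.mem_Ioc, not_and]; intro h; linarith),
        Set.indicator_of_mem (show y ∈ Set.Ioc (1/2:ℝ) 1 from ⟨hy1, hy2⟩)]
      norm_num
    rw [this]; ring
  · -- outside
    have hout : j + 1 ≤ K * 2^r ∨ K * 2^r + 2^r ≤ j := by
      have hp : 2^(r-1) + 2^(r-1) = 2^r := by
        have : r - 1 + 1 = r := by omega
        calc 2^(r-1) + 2^(r-1) = 2^(r-1) * 2 := by ring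
        _ = 2^r := by rw [← pow_succ, this]
      generalize hB : K * 2^r = B at h1 h2
      generalize ha : 2^(r-1) = a at h1 h2 hp
      generalize ht : 2^r = t at h1 h2 hp
      omega
    have : haarMother y = 0 := by
      rcases hout with h | h
      · have c : ((j:ℝ)) + 1 ≤ ((K * 2^r : ℕ) : ℝ) := by exact_mod_cast h
        push_cast at c
        have hy0 : y ≤ 0 := by nlinarith
        rw [haarMother, Set.indicator_of_notMem (by simp only [Set.mem_Ioc, not_and]; intro hh; linarith),
          Set.indicator_of_notMem (by simp only [Set.mem_Ioc, not_and]; intro hh; linarith)]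
        norm_num
      · have c : ((K * 2^r + 2^r : ℕ) : ℝ) ≤ (j:ℝ) := by exact_mod_cast h
        push_cast at c
        have hy0 : 1 < y := by nlinarith
        rw [haarMother, Set.indicator_of_notMem (by simp only [Set.mem_Ioc, not_and]; intro hh; linarith),
          Set.indicator_of_notMem (by simp only [Set.mem_Ioc, not_and]; intro hh; linarith)]
        norm_num
    rw [this, mul_zero]

lemma invM0_integrable (M0 : ℝ → ℝ) (hmeas : Measurable M0) (m : ℝ) (hm : 0 < m)
    (hb : ∀ u ∈ Set.Icc (0:ℝ) 1, m ≤ M0 u) :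
    IntegrableOn (fun x => 1/M0 x) (Set.Icc (0:ℝ) 1) := by
  apply Integrable.mono' (integrable_const (1/m))
  · exact (measurable_const.div hmeas).aestronglyMeasurable
  · filter_upwards [ae_restrict_mem measurableSet_Icc] with x hx
    have h1 := hb x hx
    have h2 : 0 < M0 x := lt_of_lt_of_le hm h1
    rw [Real.norm_eq_abs, abs_of_nonneg (by positivity)]
    rw [div_le_div_iff₀ h2 hm]
    linarith

lemma avg_close (M0 : ℝ → ℝ) (hmeas : Measurable M0) (m C0 : ℝ) (hm : 0 < m) (hC0 : 0 < C0)
    (hb : ∀ u ∈ Set.Icc (0:ℝ) 1, m ≤ M0 u)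
    (hLip : LipschitzOnWith (Real.toNNReal C0) (fun u => 1 / M0 u) (Set.Icc 0 1))
    (a b : ℝ) (hab : a ≤ b) (h0 : 0 ≤ a) (h1 : b ≤ 1) (p : ℝ) (hp : p ∈ Set.Icc a b) :
    |(∫ x in Set.Ioc a b, 1/M0 x) - (b - a) * (1/M0 p)| ≤ C0 * (b-a) * (b-a) := by
  have hsub : Set.Icc a b ⊆ Set.Icc (0:ℝ) 1 := Set.Icc_subset_Icc h0 h1
  have hint : IntegrableOn (fun x => 1/M0 x) (Set.Ioc a b) :=
    (invM0_integrable M0 hmeas m hm hb).mono_set (Set.Ioc_subset_Icc_self.trans hsub)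
  have hvol : (volume (Set.Ioc a b)).toReal = b - a := by
    rw [Real.volume_Ioc, ENNReal.toReal_ofReal (by linarith)]
  have heq : (∫ x in Set.Ioc a b, 1/M0 x) - (b - a) * (1/M0 p)
      = ∫ x in Set.Ioc a b, (1/M0 x - 1/M0 p) := by
    rw [integral_sub hint (integrableOn_const (by rw [Real.volume_Ioc]; exact ENNReal.ofReal_ne_top))]
    rw [setIntegral_const, measureReal_def, hvol, smul_eq_mul]
  rw [heq, ← Real.norm_eq_abs]
  have hle := norm_setIntegral_le_of_norm_le_const_ae' (μ := volume)
    (f := fun x => 1/M0 x - 1/M0 p)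
    (s := Set.Ioc a b)
    (by rw [Real.volume_Ioc]; exact ENNReal.ofReal_lt_top)
    (C := C0 * (b - a))
    (Filter.Eventually.of_forall (fun x hx => by
      have hxI : x ∈ Set.Icc a b := Set.Ioc_subset_Icc_self hx
      have := hLip.dist_le_mul x (hsub hxI) p (hsub hp)
      rw [Real.coe_toNNReal C0 hC0.le] at this
      have hd : dist x p ≤ b - a := by
        rw [Real.dist_eq]
        rw [abs_sub_le_iff]
        constructor <;> [linarith [hxI.1, hxI.2, hp.1, hp.2]; linarith [hxI.1, hxI.2, hp.1, hp.2]]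
      calc ‖1/M0 x - 1/M0 p‖ = dist ((fun u => 1/M0 u) x) ((fun u => 1/M0 u) p) := by
            rw [Real.dist_eq]; rfl
        _ ≤ C0 * dist x p := this
        _ ≤ C0 * (b - a) := by nlinarith [dist_nonneg (x := x) (y := p)]))
  rw [measureReal_def, hvol] at hle
  linarith [hle]

lemma int_bound (M0 : ℝ → ℝ) (hmeas : Measurable M0) (m : ℝ) (hm : 0 < m)
    (hb : ∀ u ∈ Set.Icc (0:ℝ) 1, m ≤ M0 u)
    (a b : ℝ) (hab : a ≤ b) (h0 : 0 ≤ a) (h1 : b ≤ 1) :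
    |∫ x in Set.Ioc a b, 1/M0 x| ≤ (1/m) * (b - a) := by
  have hvol : (volume (Set.Ioc a b)).toReal = b - a := by
    rw [Real.volume_Ioc, ENNReal.toReal_ofReal (by linarith)]
  rw [← Real.norm_eq_abs]
  have hle := norm_setIntegral_le_of_norm_le_const_ae' (μ := volume)
    (f := fun x => 1/M0 x) (s := Set.Ioc a b)
    (by rw [Real.volume_Ioc]; exact ENNReal.ofReal_lt_top)
    (C := 1/m)
    (Filter.Eventually.of_forall (fun x hx => by
      have hxI : x ∈ Set.Icc (0:ℝ) 1 := Set.Icc_subset_Icc h0 h1 (Set.Ioc_subset_Icc_self hx)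
      have hmx := hb x hxI
      have h2 : 0 < M0 x := lt_of_lt_of_le hm hmx
      rw [Real.norm_eq_abs, abs_of_nonneg (by positivity), div_le_div_iff₀ h2 hm]
      linarith))
  rw [measureReal_def, hvol] at hle
  exact hle

/-- Total-variation bound for the histogram heights `H_j = 2^{L_n+1} ∫_{I^{L_n+1}_j} ψ_{LK}/M0`
of the projection `P_{L_n}(ψ_{LK}/M0)`: `Σ_{j=1}^{2^{L_n+1}−1} |H_j − H_{j−1}| ≤ C 2^{L/2}`,
with `C` depending only on the lower bound `m` of `M0` and the Lipschitz constant `C0` of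
`1/M0`. -/
theorem histogram_heights_total_variation
    (m C0 : ℝ) (hm : 0 < m) (hC0 : 0 < C0) :
    ∃ C : ℝ, 0 < C ∧
      ∀ M0 : ℝ → ℝ, Measurable M0 →
        (∀ u ∈ Set.Icc (0:ℝ) 1, m ≤ M0 u ∧ M0 u ≤ 1) →
        LipschitzOnWith (Real.toNNReal C0) (fun u => 1 / M0 u) (Set.Icc 0 1) →
        ∀ Ln L K : ℕ, L ≤ Ln → K < 2 ^ L →
          (∑ j ∈ Finset.Ico (1:ℕ) (2 ^ (Ln + 1)),
              |((2:ℝ) ^ (Ln + 1) *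
                  ∫ x in ((j:ℝ) / 2 ^ (Ln + 1))..(((j:ℝ) + 1) / 2 ^ (Ln + 1)),
                    haarPsi L K x / M0 x)
                - ((2:ℝ) ^ (Ln + 1) *
                  ∫ x in (((j:ℝ) - 1) / 2 ^ (Ln + 1))..((j:ℝ) / 2 ^ (Ln + 1)),
                    haarPsi L K x / M0 x)|)
            ≤ C * (2:ℝ) ^ ((L:ℝ) / 2) := by
  refine ⟨6/m + 2*C0, by positivity, ?_⟩
  intro M0 hmeas hbnd hLip Ln L K hLK hK
  have hb : ∀ u ∈ Set.Icc (0:ℝ) 1, m ≤ M0 u := fun u hu => (hbnd u hu).1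
  set N : ℕ := Ln + 1 with hNdef
  set r : ℕ := N - L with hrdef
  have hr : 1 ≤ r := by omega
  have hNr : N = L + r := by omega
  have hp : 2^(r-1) + 2^(r-1) = 2^r := by
    have h1 : r - 1 + 1 = r := by omega
    calc 2^(r-1) + 2^(r-1) = 2^(r-1) * 2 := by ring
    _ = 2^r := by rw [← pow_succ, h1]
  set P : ℝ := (2:ℝ)^((L:ℝ)/2) with hPdef
  have hP : 0 < P := by positivity
  have h2N : (0:ℝ) < 2^N := by positivity
  set c : ℕ → ℝ := fun j =>
    if K * 2^r ≤ j ∧ j < K * 2^r + 2^(r-1) then P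
    else if K * 2^r + 2^(r-1) ≤ j ∧ j < K*2^r + 2^r then -P
    else 0 with hc
  set A : ℕ → ℝ := fun j => ∫ x in Set.Ioc ((j:ℝ)/2^N) (((j:ℝ)+1)/2^N), 1/M0 x with hA
  -- endpoint facts
  have hend : ∀ j : ℕ, j < 2^N →
      0 ≤ (j:ℝ)/2^N ∧ ((j:ℝ)+1)/2^N ≤ 1 ∧ (j:ℝ)/2^N ≤ ((j:ℝ)+1)/2^N := by
    intro j hj
    have h1 : (j:ℝ) + 1 ≤ 2^N := by
      have : (j:ℕ) + 1 ≤ 2^N := hj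
      exact_mod_cast (by exact_mod_cast this : ((j+1 : ℕ):ℝ) ≤ ((2^N : ℕ):ℝ))
    refine ⟨by positivity, ?_, ?_⟩
    · rw [div_le_one h2N]; linarith
    · gcongr
      linarith
  -- H_j = 2^N * (c j * A j)
  have hH : ∀ j : ℕ, j < 2^N →
      ((2:ℝ)^N * ∫ x in ((j:ℝ)/2^N)..(((j:ℝ)+1)/2^N), haarPsi L K x / M0 x)
        = 2^N * (c j * A j) := by
    intro j hj
    obtain ⟨he0, he1, hele⟩ := hend j hj
    rw [intervalIntegral.integral_of_le hele]
    congr 1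
    rw [show c j * A j = ∫ x in Set.Ioc ((j:ℝ)/2^N) (((j:ℝ)+1)/2^N), c j * (1/M0 x) from
      (MeasureTheory.integral_const_mul _ _).symm]
    apply setIntegral_congr_fun measurableSet_Ioc
    intro x hx
    show haarPsi L K x / M0 x = c j * (1/M0 x)
    rw [haar_step L K N j r hr hNr x hx.1 hx.2]
    simp only [hc, hPdef]
    rw [div_eq_mul_inv, one_div]
  -- bounds on |c| and |A|
  have hcabs : ∀ j : ℕ, |c j| ≤ P := by
    intro j
    simp only [hc]
    split_ifs
    · rw [abs_of_pos hP]
    · rw [abs_neg, abs_of_pos hP]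
    · rw [abs_zero]; exact hP.le
  have hAabs : ∀ j : ℕ, j < 2^N → |A j| ≤ (1/m) * (1/2^N) := by
    intro j hj
    obtain ⟨he0, he1, hele⟩ := hend j hj
    have := int_bound M0 hmeas m hm hb _ _ hele he0 he1
    simp only [hA]
    convert this using 2
    field_simp
    ring
  have hApt : ∀ j : ℕ, j < 2^N → ∀ p ∈ Set.Icc ((j:ℝ)/2^N) (((j:ℝ)+1)/2^N),
      |A j - (1/2^N) * (1/M0 p)| ≤ C0 * (1/2^N) * (1/2^N) := by
    intro j hj p hp
    obtain ⟨he0, he1, hele⟩ := hend j hj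
    have := avg_close M0 hmeas m C0 hm hC0 hb hLip _ _ hele he0 he1 p hp
    have hba : ((j:ℝ)+1)/2^N - (j:ℝ)/2^N = 1/2^N := by field_simp; ring
    rw [hba] at this
    exact this
  -- pointwise bound
  set b : ℕ → ℝ := fun j =>
    (if j = K*2^r ∨ j = K*2^r + 2^(r-1) ∨ j = K*2^r + 2^r then 2*P/m else 0)
    + (if K*2^r ≤ j ∧ j < K*2^r + 2^r then 2*C0*P/2^N else 0) with hbdef
  have ite_nn : ∀ (q : Prop) (inst : Decidable q) (v : ℝ), 0 ≤ v → 0 ≤ (ite q v 0) := by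
    intro q inst v hv
    split_ifs
    exacts [hv, le_rfl]
  have hbnn : ∀ j, 0 ≤ b j := by
    intro j; simp only [hbdef]
    exact add_nonneg (ite_nn _ _ _ (by positivity)) (ite_nn _ _ _ (by positivity))
  have hptwise : ∀ j ∈ Finset.Ico (1:ℕ) (2^N),
      |((2:ℝ)^N * ∫ x in ((j:ℝ)/2^N)..(((j:ℝ)+1)/2^N), haarPsi L K x / M0 x)
        - ((2:ℝ)^N * ∫ x in (((j:ℝ)-1)/2^N)..((j:ℝ)/2^N), haarPsi L K x / M0 x)| ≤ b j := by
    intro j hj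
    rw [Finset.mem_Ico] at hj
    obtain ⟨hj1, hj2⟩ := hj
    have hjm : (j:ℝ) - 1 = ((j-1:ℕ):ℝ) := by
      have : (1:ℕ) ≤ j := hj1
      push_cast [this]; ring
    have hjm2 : (j:ℝ) = ((j-1:ℕ):ℝ) + 1 := by rw [← hjm]; ring
    rw [hH j hj2]
    rw [show ((2:ℝ)^N * ∫ x in (((j:ℝ)-1)/2^N)..((j:ℝ)/2^N), haarPsi L K x / M0 x)
        = 2^N * (c (j-1) * A (j-1)) by
      rw [hjm, hjm2]; exact hH (j-1) (by omega)]
    by_cases hjump : j = K*2^r ∨ j = K*2^r + 2^(r-1) ∨ j = K*2^r + 2^r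
    · -- jump case
      have h1 : |c j| * |A j| ≤ P * ((1/m)*(1/2^N)) :=
        mul_le_mul (hcabs j) (hAabs j hj2) (abs_nonneg _) hP.le
      have h2 : |c (j-1)| * |A (j-1)| ≤ P * ((1/m)*(1/2^N)) :=
        mul_le_mul (hcabs (j-1)) (hAabs (j-1) (by omega)) (abs_nonneg _) hP.le
      have hbj : b j = 2*P/m + (if K*2^r ≤ j ∧ j < K*2^r + 2^r then 2*C0*P/2^N else 0) := by
        simp only [hbdef, if_pos hjump]
      have hb2 : (0:ℝ) ≤ (if K*2^r ≤ j ∧ j < K*2^r + 2^r then 2*C0*P/2^N else 0) :=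
        ite_nn _ _ _ (by positivity)
      calc |2^N * (c j * A j) - 2^N * (c (j-1) * A (j-1))|
          ≤ |2^N * (c j * A j)| + |2^N * (c (j-1) * A (j-1))| := abs_sub _ _
        _ = 2^N * (|c j| * |A j|) + 2^N * (|c (j-1)| * |A (j-1)|) := by
            rw [abs_mul, abs_mul, abs_mul, abs_mul, abs_of_pos h2N]
        _ ≤ 2^N * (P * ((1/m)*(1/2^N))) + 2^N * (P * ((1/m)*(1/2^N))) := by
            have := h2N.le
            gcongr
        _ = 2*P/m := by field_simp; ring
        _ ≤ b j := by rw [hbj]; linarith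
    · -- no jump: c j = c (j-1)
      push_neg at hjump
      obtain ⟨hne1, hne2, hne3⟩ := hjump
      have hiff1 : (K*2^r ≤ j ∧ j < K*2^r + 2^(r-1)) ↔ (K*2^r ≤ j-1 ∧ j-1 < K*2^r + 2^(r-1)) := by
        generalize hB : K * 2^r = B at *
        generalize ha : 2^(r-1) = a at *
        generalize ht : 2^r = t at *
        omega
      have hiff2 : (K*2^r + 2^(r-1) ≤ j ∧ j < K*2^r + 2^r) ↔ (K*2^r + 2^(r-1) ≤ j-1 ∧ j-1 < K*2^r + 2^r) := by
        generalize hB : K * 2^r = B at *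
        generalize ha : 2^(r-1) = a at *
        generalize ht : 2^r = t at *
        omega
      have hcc : c j = c (j-1) := by
        simp only [hc, hiff1, hiff2]
      by_cases hz : c j = 0
      · rw [hcc] at hz ⊢
        rw [hz]
        simp
        exact hbnn j
      · -- c j ≠ 0, so j in support range
        have hrange : K*2^r ≤ j ∧ j < K*2^r + 2^r := by
          by_contra hcon
          apply hz
          simp only [hc]
          rw [if_neg, if_neg]
          · intro hcond
            apply hcon
            generalize hB : K * 2^r = B at *
            generalize ha : 2^(r-1) = a at *
            generalize ht : 2^r = t at *
            omega
          · intro hcond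
            apply hcon
            generalize hB : K * 2^r = B at *
            generalize ha : 2^(r-1) = a at *
            generalize ht : 2^r = t at *
            omega
        have hbj : b j = (if j = K*2^r ∨ j = K*2^r + 2^(r-1) ∨ j = K*2^r + 2^r then 2*P/m else 0) + 2*C0*P/2^N := by
          simp only [hbdef, if_pos hrange]
        have hb1 : (0:ℝ) ≤ (if j = K*2^r ∨ j = K*2^r + 2^(r-1) ∨ j = K*2^r + 2^r then 2*P/m else 0) :=
          ite_nn _ _ _ (by positivity)
        -- A-difference bound via common point p = j/2^N
        set p : ℝ := (j:ℝ)/2^N with hpdef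
        have hd1 : |A j - (1/2^N) * (1/M0 p)| ≤ C0 * (1/2^N) * (1/2^N) := by
          apply hApt j hj2
          refine ⟨le_rfl, ?_⟩
          have := (hend j hj2).2.2
          linarith [this]
        have hd2 : |A (j-1) - (1/2^N) * (1/M0 p)| ≤ C0 * (1/2^N) * (1/2^N) := by
          have hpe : p = (((j-1:ℕ):ℝ)+1)/2^N := by rw [hpdef, ← hjm2]
          rw [hpe]
          apply hApt (j-1) (by omega)
          exact ⟨(hend (j-1) (by omega)).2.2, le_rfl⟩
        have hAd : |A j - A (j-1)| ≤ 2 * (C0 * (1/2^N) * (1/2^N)) := by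
          calc |A j - A (j-1)| = |(A j - (1/2^N)*(1/M0 p)) - (A (j-1) - (1/2^N)*(1/M0 p))| := by ring_nf
            _ ≤ |A j - (1/2^N)*(1/M0 p)| + |A (j-1) - (1/2^N)*(1/M0 p)| := abs_sub _ _
            _ ≤ 2 * (C0 * (1/2^N) * (1/2^N)) := by linarith
        calc |2^N * (c j * A j) - 2^N * (c (j-1) * A (j-1))|
            = 2^N * |c j| * |A j - A (j-1)| := by
              rw [← hcc]
              rw [show (2:ℝ)^N * (c j * A j) - 2^N * (c j * A (j-1)) = (2^N * c j) * (A j - A (j-1)) by ring]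
              rw [abs_mul, abs_mul, abs_of_pos h2N]
          _ ≤ 2^N * P * (2 * (C0 * (1/2^N) * (1/2^N))) := by
              have := h2N.le
              gcongr
              exact hcabs j
          _ = 2*C0*P/2^N := by field_simp
          _ ≤ b j := by rw [hbj]; linarith
  -- sum up
  have hsum := Finset.sum_le_sum hptwise
  have hsumb : ∑ j ∈ Finset.Ico 1 (2^N), b j ≤ 3 * (2*P/m) + 2*C0*P := by
    simp only [hbdef]
    rw [Finset.sum_add_distrib]
    have hpart1 : ∑ j ∈ Finset.Ico 1 (2^N),
        (if j = K*2^r ∨ j = K*2^r + 2^(r-1) ∨ j = K*2^r + 2^r then 2*P/m else (0:ℝ))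
        ≤ 3 * (2*P/m) := by
      rw [← Finset.sum_filter]
      have hcard : (Finset.filter (fun j => j = K*2^r ∨ j = K*2^r + 2^(r-1) ∨ j = K*2^r + 2^r)
          (Finset.Ico 1 (2^N))).card ≤ 3 := by
        have hsub : Finset.filter (fun j => j = K*2^r ∨ j = K*2^r + 2^(r-1) ∨ j = K*2^r + 2^r)
            (Finset.Ico 1 (2^N)) ⊆ {K*2^r, K*2^r + 2^(r-1), K*2^r + 2^r} := by
          intro x hx
          simp only [Finset.mem_filter] at hx
          simp only [Finset.mem_insert, Finset.mem_singleton]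
          tauto
        calc _ ≤ ({K*2^r, K*2^r + 2^(r-1), K*2^r + 2^r} : Finset ℕ).card := Finset.card_le_card hsub
          _ ≤ 3 := by
            apply (Finset.card_insert_le _ _).trans
            have := Finset.card_insert_le (K*2^r + 2^(r-1)) ({K*2^r + 2^r} : Finset ℕ)
            simp only [Finset.card_singleton] at this
            omega
      rw [Finset.sum_const, nsmul_eq_mul]
      have : (0:ℝ) ≤ 2*P/m := by positivity
      calc (_ : ℝ) ≤ (3:ℕ) * (2*P/m) := by
            apply mul_le_mul_of_nonneg_right _ this
            exact_mod_cast hcard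
        _ = 3 * (2*P/m) := by norm_num
    have hpart2 : ∑ j ∈ Finset.Ico 1 (2^N),
        (if K*2^r ≤ j ∧ j < K*2^r + 2^r then 2*C0*P/2^N else (0:ℝ)) ≤ 2*C0*P := by
      rw [← Finset.sum_filter]
      have hcard : (Finset.filter (fun j => K*2^r ≤ j ∧ j < K*2^r + 2^r)
          (Finset.Ico 1 (2^N))).card ≤ 2^r := by
        have hsub : Finset.filter (fun j => K*2^r ≤ j ∧ j < K*2^r + 2^r)
            (Finset.Ico 1 (2^N)) ⊆ Finset.Ico (K*2^r) (K*2^r + 2^r) := by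
          intro x hx
          simp only [Finset.mem_filter] at hx
          rw [Finset.mem_Ico]
          exact hx.2
        calc _ ≤ (Finset.Ico (K*2^r) (K*2^r + 2^r)).card := Finset.card_le_card hsub
          _ = 2^r := by rw [Nat.card_Ico, Nat.add_sub_cancel_left]
      rw [Finset.sum_const, nsmul_eq_mul]
      have hv : (0:ℝ) ≤ 2*C0*P/2^N := by positivity
      have hcast : ((Finset.filter (fun j => K*2^r ≤ j ∧ j < K*2^r + 2^r) (Finset.Ico 1 (2^N))).card : ℝ) ≤ (2:ℝ)^r := by
        exact_mod_cast hcard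
      calc (_ : ℝ) ≤ (2:ℝ)^r * (2*C0*P/2^N) := mul_le_mul_of_nonneg_right hcast hv
        _ ≤ 2*C0*P := by
          have h2L1 : (1:ℝ) ≤ 2^L := by
            exact_mod_cast Nat.one_le_two_pow (n := L)
          have heq : (2:ℝ)^r * (2*C0*P/2^N) = (2*C0*P) / 2^L := by
            rw [hNr, pow_add]
            field_simp
          rw [heq, div_le_iff₀ (by positivity : (0:ℝ) < 2^L)]
          nlinarith [mul_le_mul_of_nonneg_left h2L1 (show (0:ℝ) ≤ 2*C0*P by positivity)]
    linarith
  calc _ ≤ ∑ j ∈ Finset.Ico 1 (2^N), b j := hsum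
    _ ≤ 3 * (2*P/m) + 2*C0*P := hsumb
    _ = (6/m + 2*C0) * P := by field_simp; ring
end
end

section
/- There exists a constant C = C(m, C0) such that for all integers 0 ≤ L ≤ L_n and 0 ≤ K < 2^L: ess sup_{x∈[0,1]} |ψ_{LK}(x)/M0(x) − P_{L_n}(ψ_{LK}/M0)(x)| ≤ C·2^{L/2}·2^{−L_n}. -/
open MeasureTheory Real Set

noncomputable section

lemma haarMother_eq_ite (u : ℝ) :
    haarMother u = if ⌈2*u⌉ = 1 then 1 else if ⌈2*u⌉ = 2 then -1 else 0 := by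
  have e1 : ((0:ℝ) < u ∧ u ≤ 2⁻¹) ↔ ⌈2*u⌉ = 1 := by
    rw [Int.ceil_eq_iff]
    push_cast
    constructor <;> rintro ⟨h1, h2⟩ <;> exact ⟨by linarith, by linarith⟩
  have e2 : ((2⁻¹:ℝ) < u ∧ u ≤ 1) ↔ ⌈2*u⌉ = 2 := by
    rw [Int.ceil_eq_iff]
    push_cast
    constructor <;> rintro ⟨h1, h2⟩ <;> exact ⟨by linarith, by linarith⟩
  rw [haarMother, Set.indicator_apply, Set.indicator_apply]
  by_cases hA : ⌈2*u⌉ = 1 <;> by_cases hB : ⌈2*u⌉ = 2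
  · omega
  all_goals simp [e1, e2, hA, hB]

lemma haarMother_congr_ceil {u v : ℝ} (h : ⌈2*u⌉ = ⌈2*v⌉) :
    haarMother u = haarMother v := by
  rw [haarMother_eq_ite, haarMother_eq_ite, h]

lemma abs_haarMother_le_one (u : ℝ) : |haarMother u| ≤ 1 := by
  rw [haarMother_eq_ite]
  split_ifs <;> norm_num

lemma abs_haarPsi_le (l k : ℕ) (x : ℝ) :
    |haarPsi l k x| ≤ (2:ℝ) ^ ((l:ℝ)/2) := by
  rw [haarPsi, abs_mul, abs_of_pos (rpow_pos_of_pos two_pos _)]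
  calc (2:ℝ) ^ ((l:ℝ)/2) * |haarMother ((2:ℝ) ^ l * x - k)|
      ≤ (2:ℝ) ^ ((l:ℝ)/2) * 1 := by
        have := abs_haarMother_le_one ((2:ℝ) ^ l * x - k)
        nlinarith [rpow_pos_of_pos (two_pos (α := ℝ)) ((l:ℝ)/2), abs_nonneg (haarMother ((2:ℝ) ^ l * x - k))]
    _ = (2:ℝ) ^ ((l:ℝ)/2) := mul_one _

set_option maxHeartbeats 2000000 in
lemma pointwise_bound (m C0 : ℝ) (hm : 0 < m) (hC0 : 0 < C0)
    (M0 : ℝ → ℝ) (hM0meas : Measurable M0)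
    (hbd : ∀ u ∈ Set.Icc (0:ℝ) 1, m ≤ M0 u ∧ M0 u ≤ 1)
    (hlip : LipschitzOnWith (Real.toNNReal C0) (fun u => 1 / M0 u) (Set.Icc 0 1))
    (Ln L K : ℕ) (hLLn : L ≤ Ln) {x : ℝ} (hx : x ∈ Set.Ioc (0:ℝ) 1) :
    |haarPsi L K x / M0 x - dyadicProj Ln (fun t => haarPsi L K t / M0 t) x|
      ≤ C0 * (2:ℝ) ^ ((L:ℝ)/2) * (2:ℝ) ^ (-(Ln:ℝ)) := by
  obtain ⟨hx0, hx1⟩ := hx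
  set N : ℕ := Ln + 1 with hN
  have h2N : (0:ℝ) < 2 ^ N := by positivity
  set j : ℤ := ⌈(2:ℝ) ^ N * x⌉ with hj
  have hj1 : 1 ≤ j := by
    have : (0:ℤ) < j := Int.lt_ceil.mpr (by push_cast; positivity)
    omega
  have hj2 : j ≤ 2 ^ N := by
    have : (2:ℝ) ^ N * x ≤ ((2 ^ N : ℤ) : ℝ) := by
      push_cast
      nlinarith
    exact Int.ceil_le.mpr this
  set a : ℝ := ((j:ℝ) - 1) / 2 ^ N with ha
  set b : ℝ := (j:ℝ) / 2 ^ N with hb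
  have hab : a < b := by
    rw [ha, hb, div_lt_div_iff₀ h2N h2N]
    nlinarith
  have hba : b - a = 1 / 2 ^ N := by
    rw [ha, hb]; field_simp; ring
  have ha0 : 0 ≤ a := by
    apply div_nonneg _ h2N.le
    have : (1:ℝ) ≤ (j:ℝ) := by exact_mod_cast hj1
    linarith
  have hb1 : b ≤ 1 := by
    rw [hb, div_le_one h2N]
    exact_mod_cast hj2
  have hsub : Set.Ioc a b ⊆ Set.Icc (0:ℝ) 1 := fun t ht =>
    ⟨le_trans ha0 ht.1.le, le_trans ht.2 hb1⟩
  have hxab : x ∈ Set.Ioc a b := by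
    constructor
    · rw [ha, div_lt_iff₀ h2N]
      have := Int.ceil_lt_add_one ((2:ℝ) ^ N * x)
      rw [← hj] at this
      linarith [this]
    · rw [hb, le_div_iff₀ h2N]
      have := Int.le_ceil ((2:ℝ) ^ N * x)
      rw [← hj] at this
      linarith [this]
  -- constancy of the ceiling ⌈2^(L+1) t⌉ on Ioc a b
  obtain ⟨d, hd⟩ : ∃ d : ℕ, N = (L + 1) + d := ⟨Ln - L, by omega⟩
  have h2d : (0:ℝ) < 2 ^ d := by positivity
  have hpow : (2:ℝ) ^ N = 2 ^ (L+1) * 2 ^ d := by rw [hd, pow_add]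
  set c : ℤ := ⌈(j:ℝ) / 2 ^ d⌉ with hc
  have hcj : ((c:ℝ) - 1) ≤ ((j:ℝ) - 1) / 2 ^ d := by
    have h1 : (c:ℝ) < (j:ℝ) / 2 ^ d + 1 := Int.ceil_lt_add_one _
    have h2 : ((c - 1 : ℤ) : ℝ) * ((2^d : ℤ):ℝ) < (j:ℝ) := by
      push_cast
      rw [sub_mul]
      calc ((c:ℝ)) * 2^d - 1 * 2^d < ((j:ℝ)/2^d + 1) * 2^d - 2^d := by nlinarith
        _ = (j:ℝ) := by field_simp; ring
    have h3 : (c - 1) * 2 ^ d < j := by exact_mod_cast h2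
    have h4 : (c - 1) * 2 ^ d ≤ j - 1 := by omega
    rw [le_div_iff₀ h2d]
    calc ((c:ℝ) - 1) * 2 ^ d = (((c-1) * 2^d : ℤ) : ℝ) := by push_cast; ring
      _ ≤ ((j - 1 : ℤ) : ℝ) := by exact_mod_cast h4
      _ = (j:ℝ) - 1 := by push_cast; ring
  have hceil : ∀ t ∈ Set.Ioc a b, ⌈(2:ℝ) ^ (L+1) * t⌉ = c := by
    intro t ht
    have htb : (2:ℝ) ^ (L+1) * t ≤ (j:ℝ) / 2 ^ d := by
      have h6 : 2 ^ N * t ≤ (j:ℝ) := by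
        have := ht.2
        rw [hb, le_div_iff₀ h2N] at this
        linarith
      rw [le_div_iff₀ h2d]
      calc (2:ℝ) ^ (L+1) * t * 2 ^ d = 2 ^ N * t := by rw [hpow]; ring
        _ ≤ (j:ℝ) := h6
    have hta : ((j:ℝ) - 1) / 2 ^ d < (2:ℝ) ^ (L+1) * t := by
      have h6 : ((j:ℝ) - 1) < 2 ^ N * t := by
        have := ht.1
        rw [ha, div_lt_iff₀ h2N] at this
        linarith
      rw [div_lt_iff₀ h2d]
      calc ((j:ℝ) - 1) < 2 ^ N * t := h6
        _ = (2:ℝ) ^ (L+1) * t * 2 ^ d := by rw [hpow]; ring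
    have hle : ⌈(2:ℝ) ^ (L+1) * t⌉ ≤ c := Int.ceil_le.mpr (htb.trans (Int.le_ceil _))
    have hge : c ≤ ⌈(2:ℝ) ^ (L+1) * t⌉ := by
      have : ((c - 1 : ℤ) : ℝ) < (2:ℝ) ^ (L+1) * t := by
        push_cast
        linarith [hcj.trans_lt hta]
      have := Int.lt_ceil.mpr this
      omega
    omega
  -- constancy of haarPsi L K on Ioc a b
  have hconst : ∀ t ∈ Set.Ioc a b, haarPsi L K t = haarPsi L K x := by
    intro t ht
    unfold haarPsi
    congr 1
    apply haarMother_congr_ceil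
    have key : ∀ s : ℝ, 2 * ((2:ℝ) ^ L * s - K) = (2:ℝ) ^ (L+1) * s - ((2 * K : ℤ) : ℝ) := by
      intro s
      push_cast
      rw [pow_succ]
      ring
    rw [key, key, Int.ceil_sub_intCast, Int.ceil_sub_intCast, hceil t ht, hceil x hxab]
    -- analytic part
  set g : ℝ → ℝ := fun u => 1 / M0 u with hg
  have hgmeas : Measurable g := measurable_const.div hM0meas
  have hgbd : ∀ t ∈ Set.Icc (0:ℝ) 1, |g t| ≤ 1/m := by
    intro t ht
    obtain ⟨h1, h2⟩ := hbd t ht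
    have hpos : 0 < M0 t := lt_of_lt_of_le hm h1
    have : g t = 1 / M0 t := rfl
    rw [this, abs_of_pos (by positivity)]
    exact one_div_le_one_div_of_le hm h1
  have hvol : volume (Set.Ioc a b) < ⊤ := measure_Ioc_lt_top
  have hint : IntegrableOn g (Set.Ioc a b) volume := by
    apply Measure.integrableOn_of_bounded (M := 1/m) hvol.ne hgmeas.aestronglyMeasurable
    refine (ae_restrict_iff' measurableSet_Ioc).2 (ae_of_all _ fun t ht => ?_)
    rw [Real.norm_eq_abs]
    exact hgbd t (hsub ht)
  set cx : ℝ := haarPsi L K x with hcx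
  have hI : ∫ t in a..b, (haarPsi L K t / M0 t) = cx * ∫ t in Set.Ioc a b, g t := by
    rw [intervalIntegral.integral_of_le hab.le]
    calc ∫ t in Set.Ioc a b, haarPsi L K t / M0 t
        = ∫ t in Set.Ioc a b, cx * g t := by
          apply setIntegral_congr_fun measurableSet_Ioc
          intro t ht
          show haarPsi L K t / M0 t = cx * g t
          rw [hconst t ht]
          exact div_eq_mul_one_div _ _
      _ = cx * ∫ t in Set.Ioc a b, g t := integral_const_mul _ _
  have hproj : dyadicProj Ln (fun t => haarPsi L K t / M0 t) x
      = 2 ^ N * (cx * ∫ t in Set.Ioc a b, g t) := by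
    unfold dyadicProj
    rw [← hN, ← hj]
    have e1 : ((j - 1 : ℤ) : ℝ) / 2 ^ N = a := by rw [ha]; push_cast; ring_nf
    rw [e1, ← hb, hI]
  have h1 : (2:ℝ) ^ N * (b - a) = 1 := by
    rw [hba]; field_simp
  have hconstint : ∫ _ in Set.Ioc a b, g x ∂volume = (b - a) * g x := by
    rw [setIntegral_const, Real.volume_real_Ioc_of_le hab.le, smul_eq_mul]
  have hdiff : g x - 2 ^ N * ∫ t in Set.Ioc a b, g t
      = 2 ^ N * ∫ t in Set.Ioc a b, (g x - g t) := by
    rw [integral_sub (integrableOn_const (C := g x) hvol.ne enorm_ne_top) hint, hconstint]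
    linear_combination (-(g x)) * h1
  have hnorm : |∫ t in Set.Ioc a b, (g x - g t)| ≤ (C0 * (b - a)) * (b - a) := by
    have hC : ∀ t ∈ Set.Ioc a b, ‖g x - g t‖ ≤ C0 * (b - a) := by
      intro t ht
      rw [Real.norm_eq_abs]
      have hd := hlip.dist_le_mul x (hsub hxab) t (hsub ht)
      rw [Real.dist_eq, Real.dist_eq, Real.coe_toNNReal C0 hC0.le] at hd
      have habs : |x - t| ≤ b - a := by
        rw [abs_sub_le_iff]
        constructor <;> [skip; skip] <;>
          · obtain ⟨hx1', hx2'⟩ := hxab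
            obtain ⟨ht1, ht2⟩ := ht
            linarith
      calc |g x - g t| ≤ C0 * |x - t| := hd
        _ ≤ C0 * (b - a) := by nlinarith
    have := norm_setIntegral_le_of_norm_le_const (μ := volume) hvol hC
    rw [Real.norm_eq_abs, Real.volume_real_Ioc_of_le hab.le] at this
    exact this
  have hcxbd : |cx| ≤ (2:ℝ) ^ ((L:ℝ)/2) := abs_haarPsi_le L K x
  have hfx : haarPsi L K x / M0 x = cx * g x := div_eq_mul_one_div _ _
  rw [hfx, hproj]
  have key : cx * g x - 2 ^ N * (cx * ∫ t in Set.Ioc a b, g t)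
      = cx * (2 ^ N * ∫ t in Set.Ioc a b, (g x - g t)) := by
    rw [← hdiff]; ring
  rw [key, abs_mul]
  have hNpos : (0:ℝ) < 2 ^ N := h2N
  have step1 : |(2:ℝ) ^ N * ∫ t in Set.Ioc a b, (g x - g t)|
      ≤ C0 * (b - a) := by
    rw [abs_mul, abs_of_pos hNpos]
    calc (2:ℝ) ^ N * |∫ t in Set.Ioc a b, (g x - g t)|
        ≤ 2 ^ N * ((C0 * (b - a)) * (b - a)) := by
          apply mul_le_mul_of_nonneg_left hnorm hNpos.le
      _ = (2 ^ N * (b - a)) * (C0 * (b - a)) := by ring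
      _ = C0 * (b - a) := by rw [h1, one_mul]
  have hba' : b - a ≤ (2:ℝ) ^ (-(Ln:ℝ)) := by
    have e2 : (2:ℝ) ^ (-(Ln:ℝ)) = ((2:ℝ) ^ Ln)⁻¹ := by
      rw [Real.rpow_neg (by norm_num : (0:ℝ) ≤ 2), Real.rpow_natCast]
    rw [hba, e2, hN, pow_succ, one_div]
    have hp : (0:ℝ) < 2 ^ Ln := by positivity
    rw [inv_le_inv₀ (by positivity) hp]
    linarith
  calc |cx| * |(2:ℝ) ^ N * ∫ t in Set.Ioc a b, (g x - g t)|
      ≤ (2:ℝ) ^ ((L:ℝ)/2) * (C0 * (b - a)) := by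
        apply mul_le_mul hcxbd step1 (abs_nonneg _) (by positivity)
    _ ≤ (2:ℝ) ^ ((L:ℝ)/2) * (C0 * (2:ℝ) ^ (-(Ln:ℝ))) := by
        apply mul_le_mul_of_nonneg_left (by nlinarith) (by positivity)
    _ = C0 * (2:ℝ) ^ ((L:ℝ)/2) * (2:ℝ) ^ (-(Ln:ℝ)) := by ring


/-- Projection error for `ψ_{LK}/M0`: for `L ≤ L_n`,
`‖ψ_{LK}/M0 − P_{L_n}(ψ_{LK}/M0)‖_∞ ≤ C 2^{L/2} 2^{−L_n}` on `[0,1]`, with `C` depending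
only on the lower bound `m` of `M0` and the Lipschitz constant `C0` of `1/M0`. -/
theorem proj_error_psiLK_div_M0
    (m C0 : ℝ) (hm : 0 < m) (hC0 : 0 < C0) :
    ∃ C : ℝ, 0 < C ∧
      ∀ M0 : ℝ → ℝ, Measurable M0 →
        (∀ u ∈ Set.Icc (0:ℝ) 1, m ≤ M0 u ∧ M0 u ≤ 1) →
        LipschitzOnWith (Real.toNNReal C0) (fun u => 1 / M0 u) (Set.Icc 0 1) →
        ∀ Ln L K : ℕ, L ≤ Ln → K < 2 ^ L →
          essSup
              (fun x => |haarPsi L K x / M0 x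
                - dyadicProj Ln (fun t => haarPsi L K t / M0 t) x|)
              (volume.restrict (Set.Ioc (0:ℝ) 1))
            ≤ C * (2:ℝ) ^ ((L:ℝ) / 2) * (2:ℝ) ^ (-(Ln:ℝ)) := by
  refine ⟨C0, hC0, ?_⟩
  intro M0 hmeas hbd hlip Ln L K hLLn hK
  have hne : (volume.restrict (Set.Ioc (0:ℝ) 1)) ≠ 0 := by
    intro h
    rw [Measure.restrict_eq_zero] at h
    simp [Real.volume_Ioc] at h
  haveI : Filter.NeBot (ae (volume.restrict (Set.Ioc (0:ℝ) 1))) :=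
    (ae_neBot (μ := volume.restrict (Set.Ioc (0:ℝ) 1))).mpr hne
  have hae : ∀ᵐ x ∂(volume.restrict (Set.Ioc (0:ℝ) 1)),
      (fun x => |haarPsi L K x / M0 x
        - dyadicProj Ln (fun t => haarPsi L K t / M0 t) x|) x
        ≤ C0 * (2:ℝ) ^ ((L:ℝ) / 2) * (2:ℝ) ^ (-(Ln:ℝ)) :=
    (ae_restrict_iff' measurableSet_Ioc).2 (ae_of_all _ fun x hx =>
      pointwise_bound m C0 hm hC0 M0 hmeas hbd hlip Ln L K hLLn hx)
  exact Filter.limsup_le_of_le (Filter.isCoboundedUnder_le_of_eventually_le (x := 0) _ (ae_of_all _ fun x => abs_nonneg _)) hae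
end
end

section
/- Let 0 < c1 ≤ c2, let λ0 : [0,1] → ℝ be measurable with c1 ≤ λ0 ≤ c2, let M0 : [0,1] → [0,1] be measurable, and let D, d > 0. There exists a constant C = C(c1, c2, D, d) such that: for every integer n ≥ 1, all reals t and μ > 0 with |t|·μ ≤ d·√n, every measurable h : [0,1] → ℝ with ess sup|h| ≤ μ and ∫_0^1 h² ≤ D², every v ≥ 0 and every measurable λ ≥ 0 with ess sup|λ − λ0| ≤ v, one has | n·∫_0^1 M0(u)·λ0(u)·[ (λ(u)/λ0(u))·(exp(−t·h(u)/√n) − 1 + t·h(u)/√n) − t²·h(u)²/(2n) ] du | ≤ C·t²·( v + |t|·μ/√n ). -/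
open MeasureTheory Real Set

noncomputable section
open Real Set

/-- nonneg on Ici 0 from derivative -/
lemma nonneg_of_deriv_aux (f f' : ℝ → ℝ) (hf : ∀ x, HasDerivAt f (f' x) x)
    (h0 : f 0 = 0) (hd' : ∀ x, 0 ≤ x → 0 ≤ f' x) : ∀ x, 0 ≤ x → 0 ≤ f x := by
  intro x hx
  have hm : MonotoneOn f (Set.Ici (0:ℝ)) := by
    apply monotoneOn_of_deriv_nonneg (convex_Ici 0)
    · exact fun y _ => (hf y).continuousAt.continuousWithinAt
    · intro y hy
      exact ((hf y).differentiableAt).differentiableWithinAt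
    · intro y hy
      rw [(hf y).deriv]
      rw [interior_Ici] at hy
      exact hd' y (le_of_lt hy)
  have := hm (Set.self_mem_Ici) (Set.mem_Ici.2 hx) hx
  linarith [h0 ▸ this]

lemma lemA : ∀ x : ℝ, 0 ≤ x → Real.exp (-x) ≤ 1 - x + x^2/2 := by
  have hder : ∀ x : ℝ, HasDerivAt (fun x : ℝ => 1 - x + x^2/2 - Real.exp (-x))
      (-1 + x + Real.exp (-x)) x := by
    intro x
    have h1 : HasDerivAt (fun x : ℝ => Real.exp (-x)) (Real.exp (-x) * (-1)) x :=
      (hasDerivAt_neg x).exp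
    have h2 : HasDerivAt (fun x : ℝ => 1 - x + x^2/2) (-1 + (2:ℕ) * x ^ 1 / 2) x :=
      ((hasDerivAt_id x).const_sub 1).add ((hasDerivAt_pow 2 x).div_const 2)
    have := h2.sub h1
    refine this.congr_deriv ?_
    push_cast; ring
  intro x hx
  have := nonneg_of_deriv_aux _ _ hder (by norm_num) (fun y hy => by
    have := Real.add_one_le_exp (-y); linarith) x hx
  linarith

lemma lemA' : ∀ x : ℝ, 0 ≤ x → 1 + x + x^2/2 ≤ Real.exp x := by
  have hder : ∀ x : ℝ, HasDerivAt (fun x : ℝ => Real.exp x - 1 - x - x^2/2)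
      (Real.exp x - 1 - x) x := by
    intro x
    have h1 := ((Real.hasDerivAt_exp x).sub_const 1).sub (hasDerivAt_id x)
    have h2 := h1.sub ((hasDerivAt_pow 2 x).div_const 2)
    refine h2.congr_deriv ?_
    push_cast; ring
  intro x hx
  have := nonneg_of_deriv_aux _ _ hder (by norm_num) (fun y hy => by
    have := Real.add_one_le_exp y; linarith) x hx
  linarith

lemma lemB : ∀ x : ℝ, 0 ≤ x → 1 - x + x^2/2 - Real.exp (-x) ≤ x^3 := by
  have hder : ∀ x : ℝ, HasDerivAt (fun x : ℝ => x^3 - (1 - x + x^2/2 - Real.exp (-x)))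
      ((3:ℕ) * x^2 - (-1 + x + Real.exp (-x))) x := by
    intro x
    have h1 : HasDerivAt (fun x : ℝ => Real.exp (-x)) (Real.exp (-x) * (-1)) x :=
      (hasDerivAt_neg x).exp
    have h2 : HasDerivAt (fun x : ℝ => 1 - x + x^2/2) (-1 + (2:ℕ) * x ^ 1 / 2) x :=
      ((hasDerivAt_id x).const_sub 1).add ((hasDerivAt_pow 2 x).div_const 2)
    have := (hasDerivAt_pow 3 x).sub (h2.sub h1)
    refine this.congr_deriv ?_
    push_cast; ring
  intro x hx
  have := nonneg_of_deriv_aux _ _ hder (by norm_num) (fun y hy => by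
    have := lemA y hy
    push_cast
    nlinarith [sq_nonneg y]) x hx
  linarith

lemma lemC : ∀ x : ℝ, 0 ≤ x → Real.exp x - 1 - x ≤ x^2/2 * Real.exp x := by
  have hder : ∀ x : ℝ, HasDerivAt (fun x : ℝ => x^2/2 * Real.exp x - (Real.exp x - 1 - x))
      ((2:ℕ) * x ^ 1 / 2 * Real.exp x + x^2/2 * Real.exp x - (Real.exp x - 1)) x := by
    intro x
    have h1 := ((hasDerivAt_pow 2 x).div_const 2).mul (Real.hasDerivAt_exp x)
    have h2 := ((Real.hasDerivAt_exp x).sub_const 1).sub (hasDerivAt_id x)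
    have := h1.sub h2
    exact this.congr_deriv rfl
  intro x hx
  have key : ∀ y : ℝ, 0 ≤ y → (1 - y) * Real.exp y ≤ 1 := by
    intro y hy
    have h1 : 1 - y ≤ Real.exp (-y) := by have := Real.add_one_le_exp (-y); linarith
    have h2 := mul_le_mul_of_nonneg_right h1 (Real.exp_nonneg y)
    rwa [← Real.exp_add, neg_add_cancel, Real.exp_zero] at h2
  have := nonneg_of_deriv_aux _ _ hder (by norm_num) (fun y hy => by
    have hk := key y hy
    have he := Real.exp_nonneg y
    push_cast
    nlinarith [sq_nonneg y]) x hx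
  linarith

lemma lemD : ∀ x : ℝ, 0 ≤ x → Real.exp x - 1 - x - x^2/2 ≤ x^3 * Real.exp x := by
  have hder : ∀ x : ℝ, HasDerivAt
      (fun x : ℝ => x^3 * Real.exp x - (Real.exp x - 1 - x - x^2/2))
      ((3:ℕ) * x^2 * Real.exp x + x^3 * Real.exp x - (Real.exp x - 1 - x)) x := by
    intro x
    have h1 := (hasDerivAt_pow 3 x).mul (Real.hasDerivAt_exp x)
    have h2 := (((Real.hasDerivAt_exp x).sub_const 1).sub (hasDerivAt_id x)).sub
      ((hasDerivAt_pow 2 x).div_const 2)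
    have := h1.sub h2
    refine this.congr_deriv ?_
    push_cast; ring
  intro x hx
  have := nonneg_of_deriv_aux _ _ hder (by norm_num) (fun y hy => by
    have hc := lemC y hy
    have he := Real.exp_nonneg y
    push_cast
    nlinarith [sq_nonneg y, mul_nonneg (mul_nonneg hy (mul_nonneg hy hy)) he,
      mul_nonneg (mul_nonneg hy hy) he]) x hx
  linarith

lemma quad_bound : ∀ z : ℝ, |Real.exp z - 1 - z| ≤ z^2 * Real.exp |z| := by
  intro z
  have hnn : 0 ≤ Real.exp z - 1 - z := by have := Real.add_one_le_exp z; linarith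
  rw [abs_of_nonneg hnn]
  rcases le_or_gt 0 z with hz | hz
  · rw [abs_of_nonneg hz]
    have := lemC z hz
    nlinarith [sq_nonneg z, Real.exp_nonneg z]
  · rw [abs_of_neg hz]
    have h1 : Real.exp z ≤ 1 + z + z^2/2 := by
      have := lemA (-z) (by linarith)
      simp only [neg_neg] at this
      nlinarith
    have h2 : 1 ≤ Real.exp (-z) := Real.one_le_exp (by linarith)
    nlinarith [sq_nonneg z]

lemma cubic_bound : ∀ z : ℝ, |Real.exp z - 1 - z - z^2/2| ≤ |z|^3 * Real.exp |z| := by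
  intro z
  rcases le_or_gt 0 z with hz | hz
  · rw [abs_of_nonneg hz]
    have hnn : 0 ≤ Real.exp z - 1 - z - z^2/2 := by have := lemA' z hz; linarith
    rw [abs_of_nonneg hnn]
    exact lemD z hz
  · rw [abs_of_neg hz]
    set x := -z with hx
    have hx0 : 0 ≤ x := by simp [hx]; linarith
    have h1 : Real.exp (-x) ≤ 1 - x + x^2/2 := lemA x hx0
    have h2 : 1 - x + x^2/2 - Real.exp (-x) ≤ x^3 := lemB x hx0
    have h3 : 1 ≤ Real.exp x := Real.one_le_exp hx0
    have hzx : z = -x := by rw [hx]; ring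
    rw [hzx]
    have habs : |Real.exp (-x) - 1 - -x - (-x)^2/2| = 1 - x + x^2/2 - Real.exp (-x) := by
      rw [abs_of_nonpos (by nlinarith)]; ring
    rw [habs]
    nlinarith [pow_nonneg hx0 3]

/-- Deterministic bound on the second-order LAN remainder in the right-censoring model,
under a supremum-norm constraint `‖λ − λ0‖_∞ ≤ v` on the hazard: the remainder after
perturbing the log-hazard in direction `h` by `t/√n` is `O(t²(v + |t|μ/√n))`, with a constant
depending only on `c1, c2, D, d`. -/
theorem lan_remainder_bound_sup
    (c1 c2 D d : ℝ) (hc1 : 0 < c1) (hc12 : c1 ≤ c2) (hD : 0 < D) (hd : 0 < d) :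
    ∃ C : ℝ, 0 < C ∧
      ∀ lam0 M0 : ℝ → ℝ, Measurable lam0 → Measurable M0 →
        (∀ u ∈ Set.Icc (0:ℝ) 1, c1 ≤ lam0 u ∧ lam0 u ≤ c2) →
        (∀ u ∈ Set.Icc (0:ℝ) 1, 0 ≤ M0 u ∧ M0 u ≤ 1) →
      ∀ n : ℕ, 1 ≤ n →
      ∀ t μ : ℝ, 0 < μ → |t| * μ ≤ d * Real.sqrt n →
      ∀ h : ℝ → ℝ, Measurable h →
        (∀ᵐ u ∂(volume.restrict (Set.Ioc (0:ℝ) 1)), |h u| ≤ μ) →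
        (∫ u in (0:ℝ)..1, (h u) ^ 2) ≤ D ^ 2 →
      ∀ v : ℝ, 0 ≤ v →
      ∀ lam : ℝ → ℝ, Measurable lam →
        (∀ᵐ u ∂(volume.restrict (Set.Ioc (0:ℝ) 1)), 0 ≤ lam u) →
        (∀ᵐ u ∂(volume.restrict (Set.Ioc (0:ℝ) 1)), |lam u - lam0 u| ≤ v) →
        |(n:ℝ) * ∫ u in (0:ℝ)..1, M0 u * lam0 u *
            ((lam u / lam0 u) *
                (Real.exp (-(t * h u / Real.sqrt n)) - 1 + t * h u / Real.sqrt n)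
              - t ^ 2 * (h u) ^ 2 / (2 * n))|
          ≤ C * t ^ 2 * (v + |t| * μ / Real.sqrt n) := by
  refine ⟨Real.exp d * D ^ 2 * (1 + c2),
    mul_pos (mul_pos (Real.exp_pos d) (pow_pos hD 2)) (by linarith), ?_⟩
  intro lam0 M0 hlam0m hM0m hlam0 hM0 n hn t μ hμ htμ h hhm hhb hhL2 v hv lam hlamm hlamnn hlamv
  have hn0 : (0:ℝ) < n := by exact_mod_cast hn
  have hsqpos : (0:ℝ) < Real.sqrt n := Real.sqrt_pos.2 hn0
  set w := |t| * μ / Real.sqrt n with hw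
  have hw0 : 0 ≤ w := by rw [hw]; positivity
  have hwd : w ≤ d := by rw [hw, div_le_iff₀ hsqpos]; linarith
  have hc20 : 0 < c2 := lt_of_lt_of_le hc1 hc12
  set K := (v + c2 * w) * Real.exp d * (t ^ 2 / n) with hK
  have hK0 : 0 ≤ K := by
    apply mul_nonneg (mul_nonneg _ (Real.exp_nonneg d)) (by positivity)
    exact add_nonneg hv (mul_nonneg hc20.le hw0)
  set f : ℝ → ℝ := fun u => M0 u * lam0 u *
      ((lam u / lam0 u) *
          (Real.exp (-(t * h u / Real.sqrt n)) - 1 + t * h u / Real.sqrt n)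
        - t ^ 2 * (h u) ^ 2 / (2 * n)) with hf
  -- pointwise a.e. bound
  have hbd : ∀ᵐ u ∂(volume.restrict (Set.Ioc (0:ℝ) 1)), ‖f u‖ ≤ K * (h u) ^ 2 := by
    filter_upwards [hhb, hlamnn, hlamv, MeasureTheory.ae_restrict_mem measurableSet_Ioc]
      with u hhu hlu hvu humem
    have hmem' : u ∈ Set.Icc (0:ℝ) 1 := Set.Ioc_subset_Icc_self humem
    obtain ⟨hl0c1, hl0c2⟩ := hlam0 u hmem'
    obtain ⟨hM0a, hM0b⟩ := hM0 u hmem'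
    have hl0pos : 0 < lam0 u := lt_of_lt_of_le hc1 hl0c1
    set z := -(t * h u / Real.sqrt n) with hz
    have hsn : (Real.sqrt n : ℝ) ^ 2 = n := Real.sq_sqrt hn0.le
    have hz2 : z ^ 2 = t ^ 2 * (h u) ^ 2 / n := by
      have : z ^ 2 = (t * h u) ^ 2 / ((Real.sqrt n) ^ 2) := by rw [hz]; ring
      rw [this, hsn, mul_pow]
    have hza : |z| = |t| * |h u| / Real.sqrt n := by
      rw [hz, abs_neg, abs_div, abs_mul, abs_of_nonneg hsqpos.le]
    have hzw : |z| ≤ w := by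
      rw [hza, hw]
      gcongr
    have hez : Real.exp |z| ≤ Real.exp d := Real.exp_le_exp.2 (hzw.trans hwd)
    have hE : |Real.exp z - 1 - z| ≤ z ^ 2 * Real.exp d :=
      (quad_bound z).trans (mul_le_mul_of_nonneg_left hez (sq_nonneg z))
    have hE2 : |Real.exp z - 1 - z - z ^ 2 / 2| ≤ |z| ^ 3 * Real.exp d :=
      (cubic_bound z).trans (mul_le_mul_of_nonneg_left hez (by positivity))
    have hrw : f u = M0 u * ((lam u - lam0 u) * (Real.exp z - 1 - z)
        + lam0 u * ((Real.exp z - 1 - z) - z ^ 2 / 2)) := by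
      rw [hf]
      have h1 : Real.exp (-(t * h u / Real.sqrt n)) - 1 + t * h u / Real.sqrt n
          = Real.exp z - 1 - z := by rw [hz]; ring
      have h2 : t ^ 2 * h u ^ 2 / (2 * (n:ℝ)) = z ^ 2 / 2 := by rw [hz2]; ring
      simp only
      rw [h1, h2]
      field_simp
      ring
    have hM0abs : |M0 u| ≤ 1 := abs_le.2 ⟨by linarith, hM0b⟩
    have hb1 : |(lam u - lam0 u) * (Real.exp z - 1 - z)| ≤ v * (z ^ 2 * Real.exp d) := by
      rw [abs_mul]
      exact mul_le_mul hvu hE (abs_nonneg _) hv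
    have hb2 : |lam0 u * ((Real.exp z - 1 - z) - z ^ 2 / 2)| ≤ c2 * (|z| ^ 3 * Real.exp d) := by
      rw [abs_mul, abs_of_pos hl0pos]
      exact mul_le_mul hl0c2 hE2 (abs_nonneg _) hc20.le
    have hz3 : |z| ^ 3 ≤ w * z ^ 2 := by
      have h3 : |z| ^ 3 = |z| * z ^ 2 := by rw [← sq_abs]; ring
      rw [h3]
      exact mul_le_mul_of_nonneg_right hzw (sq_nonneg z)
    have hsum : v * (z ^ 2 * Real.exp d) + c2 * (|z| ^ 3 * Real.exp d) ≤ K * (h u) ^ 2 := by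
      have h1 : c2 * (|z| ^ 3 * Real.exp d) ≤ c2 * (w * z ^ 2 * Real.exp d) :=
        mul_le_mul_of_nonneg_left
          (mul_le_mul_of_nonneg_right hz3 (Real.exp_nonneg d)) hc20.le
      have h2 : v * (z ^ 2 * Real.exp d) + c2 * (w * z ^ 2 * Real.exp d) = K * (h u) ^ 2 := by
        rw [hK, hz2]; ring
      linarith
    calc ‖f u‖ = |M0 u| * |(lam u - lam0 u) * (Real.exp z - 1 - z)
          + lam0 u * ((Real.exp z - 1 - z) - z ^ 2 / 2)| := by
            rw [Real.norm_eq_abs, hrw, abs_mul]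
      _ ≤ 1 * (|(lam u - lam0 u) * (Real.exp z - 1 - z)|
          + |lam0 u * ((Real.exp z - 1 - z) - z ^ 2 / 2)|) := by
            apply mul_le_mul hM0abs (abs_add_le _ _) (abs_nonneg _) zero_le_one
      _ ≤ K * (h u) ^ 2 := by rw [one_mul]; linarith
  -- integrability of the dominating function
  have hint : MeasureTheory.Integrable (fun u => K * (h u) ^ 2)
      (volume.restrict (Set.Ioc (0:ℝ) 1)) := by
    apply MeasureTheory.Integrable.const_mul
    apply MeasureTheory.Integrable.mono' (MeasureTheory.integrable_const (μ ^ 2))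
    · exact ((hhm.pow_const 2)).aestronglyMeasurable
    · filter_upwards [hhb] with u hu
      rw [Real.norm_eq_abs, abs_of_nonneg (sq_nonneg (h u)), ← sq_abs]
      exact pow_le_pow_left₀ (abs_nonneg _) hu 2
  have hIoc : (∫ u in (0:ℝ)..1, f u) = ∫ u in Set.Ioc (0:ℝ) 1, f u :=
    intervalIntegral.integral_of_le zero_le_one
  have habs : |∫ u in Set.Ioc (0:ℝ) 1, f u| ≤ K * D ^ 2 := by
    have h1 : |∫ u in Set.Ioc (0:ℝ) 1, f u| ≤ ∫ u in Set.Ioc (0:ℝ) 1, ‖f u‖ := by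
      simpa [Real.norm_eq_abs] using
        MeasureTheory.norm_integral_le_integral_norm (μ := volume.restrict (Set.Ioc (0:ℝ) 1)) f
    have h2 : (∫ u in Set.Ioc (0:ℝ) 1, ‖f u‖) ≤ ∫ u in Set.Ioc (0:ℝ) 1, K * (h u) ^ 2 :=
      MeasureTheory.integral_mono_of_nonneg
        (Filter.Eventually.of_forall fun u => norm_nonneg _) hint hbd
    have h3 : (∫ u in Set.Ioc (0:ℝ) 1, K * (h u) ^ 2) = K * ∫ u in Set.Ioc (0:ℝ) 1, (h u) ^ 2 :=
      MeasureTheory.integral_const_mul K _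
    have h4 : (∫ u in Set.Ioc (0:ℝ) 1, (h u) ^ 2) ≤ D ^ 2 := by
      rwa [intervalIntegral.integral_of_le zero_le_one] at hhL2
    calc |∫ u in Set.Ioc (0:ℝ) 1, f u| ≤ ∫ u in Set.Ioc (0:ℝ) 1, ‖f u‖ := h1
      _ ≤ ∫ u in Set.Ioc (0:ℝ) 1, K * (h u) ^ 2 := h2
      _ = K * ∫ u in Set.Ioc (0:ℝ) 1, (h u) ^ 2 := h3
      _ ≤ K * D ^ 2 := mul_le_mul_of_nonneg_left h4 hK0
  have hgoal : |(n:ℝ) * ∫ u in (0:ℝ)..1, f u| ≤ (n:ℝ) * (K * D ^ 2) := by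
    rw [abs_mul, abs_of_nonneg hn0.le, hIoc]
    exact mul_le_mul_of_nonneg_left habs hn0.le
  have hfin : (n:ℝ) * (K * D ^ 2) ≤ Real.exp d * D ^ 2 * (1 + c2) * t ^ 2 * (v + w) := by
    rw [hK]
    have hne : (n:ℝ) ≠ 0 := hn0.ne'
    have hexp : (0:ℝ) < Real.exp d := Real.exp_pos d
    have heq : (n:ℝ) * ((v + c2 * w) * Real.exp d * (t ^ 2 / n) * D ^ 2)
        = (v + c2 * w) * Real.exp d * t ^ 2 * D ^ 2 := by field_simp
    rw [heq]
    have hP : 0 ≤ Real.exp d * D ^ 2 * t ^ 2 := by positivity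
    have hvw : v + c2 * w ≤ (1 + c2) * (v + w) := by
      nlinarith [mul_nonneg hc20.le hv]
    calc (v + c2 * w) * Real.exp d * t ^ 2 * D ^ 2
        = (Real.exp d * D ^ 2 * t ^ 2) * (v + c2 * w) := by ring
      _ ≤ (Real.exp d * D ^ 2 * t ^ 2) * ((1 + c2) * (v + w)) :=
          mul_le_mul_of_nonneg_left hvw hP
      _ = Real.exp d * D ^ 2 * (1 + c2) * t ^ 2 * (v + w) := by ring
  exact hgoal.trans hfin
end
end
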